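/- Let S ⊆ ℝ³ be the convex hull of {(0,0,1)} ∪ {(5,y,z) : (y−1)² + (z−1)² ≤ 1, z ≤ 1}. Then S is compact and convex, but its lower Pareto frontier Λ(S) is not closed. -/

import Mathlib

open Real Set Filter Topology

/-- The lower Pareto frontier `Λ(S)`: the minimal elements of `S` in the
coordinatewise order, i.e. the elements of `S` dominating no other element of `S`. -/
def pareto (K : ℕ) (S : Set (Fin K → ℝ)) : Set (Fin K → ℝ) :=
  {x ∈ S | ∀ y ∈ S, y ≤ x → y = x}

/-- The solid cone: convex hull of the apex `(0,0,1)` and the semicircular disc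
`{(5,y,z) : (y-1)² + (z-1)² ≤ 1, z ≤ 1}`. -/
noncomputable def coneSet : Set (Fin 3 → ℝ) :=
  convexHull ℝ
    ({![(0:ℝ), 0, 1]} ∪
      {x : Fin 3 → ℝ | x 0 = 5 ∧ (x 1 - 1) ^ 2 + (x 2 - 1) ^ 2 ≤ 1 ∧ x 2 ≤ 1})

/-- The key quadratic inequality: convexity of the disc. -/
lemma disc_convex_aux (x1 x2 y1 y2 a b : ℝ) (hx : (x1 - 1) ^ 2 + (x2 - 1) ^ 2 ≤ 1)
    (hy : (y1 - 1) ^ 2 + (y2 - 1) ^ 2 ≤ 1) (ha : 0 ≤ a) (hb : 0 ≤ b) (hab : a + b = 1) :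
    (a * x1 + b * y1 - 1) ^ 2 + (a * x2 + b * y2 - 1) ^ 2 ≤ 1 := by
  have hb' : b = 1 - a := by linarith
  subst hb'
  nlinarith [mul_le_mul_of_nonneg_left hx ha, mul_le_mul_of_nonneg_left hy hb,
    mul_nonneg (mul_nonneg ha hb) (sq_nonneg (x1 - y1)),
    mul_nonneg (mul_nonneg ha hb) (sq_nonneg (x2 - y2))]

/-- The semicircular disc. -/
def coneDisc : Set (Fin 3 → ℝ) :=
  {x : Fin 3 → ℝ | x 0 = 5 ∧ (x 1 - 1) ^ 2 + (x 2 - 1) ^ 2 ≤ 1 ∧ x 2 ≤ 1}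

lemma convex_coneDisc : Convex ℝ coneDisc := by
  intro x hx y hy a b ha hb hab
  obtain ⟨hx0, hx1, hx2⟩ := hx
  obtain ⟨hy0, hy1, hy2⟩ := hy
  refine ⟨?_, ?_, ?_⟩ <;>
    simp only [Pi.add_apply, Pi.smul_apply, smul_eq_mul]
  · rw [hx0, hy0]; linarith
  · exact disc_convex_aux _ _ _ _ _ _ hx1 hy1 ha hb hab
  · nlinarith

lemma isCompact_coneDisc : IsCompact coneDisc := by
  apply Metric.isCompact_of_isClosed_isBounded
  · have : coneDisc = {x : Fin 3 → ℝ | x 0 = 5} ∩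
        ({x | (x 1 - 1) ^ 2 + (x 2 - 1) ^ 2 ≤ 1} ∩ {x | x 2 ≤ 1}) := rfl
    rw [this]
    refine (isClosed_eq (continuous_apply 0) continuous_const).inter
      ((isClosed_le (by fun_prop) continuous_const).inter
        (isClosed_le (continuous_apply 2) continuous_const))
  · refine Metric.isBounded_closedBall (x := 0) (r := 5) |>.subset ?_
    intro x hx
    obtain ⟨hx0, hx1, hx2⟩ := hx
    rw [Metric.mem_closedBall]
    rw [dist_pi_le_iff (by norm_num)]
    have h0b : |x 0| ≤ 5 := by rw [hx0]; norm_num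
    have h1b : |x 1| ≤ 5 := by rw [abs_le]; constructor <;> nlinarith [sq_nonneg (x 2 - 1)]
    have h2b : |x 2| ≤ 5 := by rw [abs_le]; constructor <;> nlinarith [sq_nonneg (x 1 - 1)]
    intro b
    fin_cases b
    · simpa [Real.dist_eq] using h0b
    · simpa [Real.dist_eq] using h1b
    · simpa [Real.dist_eq] using h2b

lemma coneSet_eq_join : coneSet = convexJoin ℝ {![(0:ℝ), 0, 1]} coneDisc := by
  rw [coneSet]
  refine (convex_singleton _).convexHull_union convex_coneDisc (Set.singleton_nonempty _)
    ⟨![5, 1, 1], ?_⟩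
  refine ⟨rfl, ?_, ?_⟩ <;>
    norm_num [Matrix.cons_val_one, Matrix.head_cons, Matrix.cons_val_two, Matrix.tail_cons]

lemma isCompact_coneSet : IsCompact coneSet := by
  rw [coneSet_eq_join]
  have himg : convexJoin ℝ {![(0:ℝ), 0, 1]} coneDisc =
      (fun p : ℝ × (Fin 3 → ℝ) => (1 - p.1) • ![(0:ℝ), 0, 1] + p.1 • p.2) ''
        (Set.Icc (0:ℝ) 1 ×ˢ coneDisc) := by
    ext z
    constructor
    · intro hz
      rw [convexJoin_singleton_left] at hz
      simp only [Set.mem_iUnion] at hz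
      obtain ⟨y, hy, hseg⟩ := hz
      rw [segment_eq_image] at hseg
      obtain ⟨θ, hθ, rfl⟩ := hseg
      exact ⟨(θ, y), ⟨hθ, hy⟩, rfl⟩
    · rintro ⟨⟨θ, y⟩, ⟨hθ, hy⟩, rfl⟩
      rw [convexJoin_singleton_left]
      simp only [Set.mem_iUnion]
      exact ⟨y, hy, by rw [segment_eq_image]; exact ⟨θ, hθ, rfl⟩⟩
  rw [himg]
  exact (isCompact_Icc.prod isCompact_coneDisc).image (by fun_prop)

/-- The cone is contained in the infinite cylinder over the disc. -/
lemma coneSet_subset_cyl :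
    coneSet ⊆ {x : Fin 3 → ℝ | (x 1 - 1) ^ 2 + (x 2 - 1) ^ 2 ≤ 1} := by
  rw [coneSet]
  apply convexHull_min
  · rintro x (hx | hx)
    · rw [Set.mem_singleton_iff] at hx
      subst hx
      norm_num [Matrix.cons_val_two, Matrix.tail_cons]
    · exact hx.2.1
  · intro x hx y hy a b ha hb hab
    simp only [Set.mem_setOf_eq, Pi.add_apply, Pi.smul_apply, smul_eq_mul] at *
    exact disc_convex_aux _ _ _ _ _ _ hx hy ha hb hab

/-- Supporting halfspace of the cone determined by an angle `(c, s)` on the unit circle. -/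
lemma coneSet_subset_halfspace (c s : ℝ) (hcs : c ^ 2 + s ^ 2 = 1) :
    coneSet ⊆ {x : Fin 3 → ℝ | c + s - 1 + (1 - c) ≤ (1 - c) / 5 * x 0 + c * x 1 + s * x 2} := by
  rw [coneSet]
  apply convexHull_min
  · rintro x (hx | hx)
    · rw [Set.mem_singleton_iff] at hx
      subst hx
      simp only [Set.mem_setOf_eq, Matrix.cons_val_zero, Matrix.cons_val_one, Matrix.head_cons,
        Matrix.cons_val_two, Matrix.tail_cons]
      nlinarith
    · obtain ⟨hx0, hx1, hx2⟩ := hx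
      simp only [Set.mem_setOf_eq, hx0]
      nlinarith [sq_nonneg (x 1 - 1 + c), sq_nonneg (x 2 - 1 + s)]
  · intro x hx y hy a b ha hb hab
    simp only [Set.mem_setOf_eq, Pi.add_apply, Pi.smul_apply, smul_eq_mul] at *
    calc c + s - 1 + (1 - c)
        = a * (c + s - 1 + (1 - c)) + b * (c + s - 1 + (1 - c)) := by
          linear_combination (-(c + s - 1 + (1 - c))) * hab
      _ ≤ a * ((1 - c) / 5 * x 0 + c * x 1 + s * x 2)
          + b * ((1 - c) / 5 * y 0 + c * y 1 + s * y 2) :=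
          add_le_add (mul_le_mul_of_nonneg_left hx ha) (mul_le_mul_of_nonneg_left hy hb)
      _ = (1 - c) / 5 * (a * x 0 + b * y 0) + c * (a * x 1 + b * y 1)
          + s * (a * x 2 + b * y 2) := by ring

lemma arc_mem_pareto (θ : ℝ) (h0 : 0 < θ) (h1 : θ < π / 2) :
    ![(5:ℝ), 1 - Real.cos θ, 1 - Real.sin θ] ∈ pareto 3 coneSet := by
  set c := Real.cos θ with hc
  set s := Real.sin θ with hs
  have hc0 : 0 < c := Real.cos_pos_of_mem_Ioo ⟨by linarith [Real.pi_pos], h1⟩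
  have hs0 : 0 < s := Real.sin_pos_of_pos_of_lt_pi h0 (by linarith [Real.pi_pos])
  have hcs : c ^ 2 + s ^ 2 = 1 := by
    rw [hc, hs]; exact Real.cos_sq_add_sin_sq θ
  have hc1 : c < 1 := by nlinarith
  constructor
  · apply subset_convexHull
    right
    refine ⟨rfl, ?_, ?_⟩ <;>
      simp only [Matrix.cons_val_one, Matrix.head_cons, Matrix.cons_val_two, Matrix.tail_cons,
        Matrix.cons_val_zero]
    · nlinarith
    · linarith
  · intro y hy hle
    have hC := coneSet_subset_cyl hy
    have hH := coneSet_subset_halfspace c s hcs hy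
    simp only [Set.mem_setOf_eq] at hC hH
    have h0' : y 0 ≤ 5 := by simpa using hle 0
    have h1' : y 1 ≤ 1 - c := by simpa using hle 1
    have h2' : y 2 ≤ 1 - s := by simpa using hle 2
    have key1 : c * y 1 + s * y 2 ≤ c + s - 1 := by
      nlinarith [mul_le_mul_of_nonneg_left h1' hc0.le, mul_le_mul_of_nonneg_left h2' hs0.le]
    have hy0 : y 0 = 5 := by
      have h5 : 5 ≤ y 0 := by nlinarith
      linarith
    rw [hy0] at hH
    have heq : c * y 1 + s * y 2 = c + s - 1 := le_antisymm key1 (by linarith)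
    have e1 : (y 1 - 1 + c) ^ 2 + (y 2 - 1 + s) ^ 2 ≤ 0 := by nlinarith
    have t1 : y 1 = 1 - c := by nlinarith [sq_nonneg (y 1 - 1 + c), sq_nonneg (y 2 - 1 + s)]
    have t2 : y 2 = 1 - s := by nlinarith [sq_nonneg (y 1 - 1 + c), sq_nonneg (y 2 - 1 + s)]
    funext i
    fin_cases i <;>
      simp only [Matrix.cons_val_zero, Matrix.cons_val_one, Matrix.head_cons,
        Matrix.cons_val_two, Matrix.tail_cons]
    · exact hy0
    · exact t1
    · exact t2

lemma apex_mem_coneSet : ![(0:ℝ), 0, 1] ∈ coneSet :=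
  subset_convexHull ℝ _ (Or.inl rfl)

/-- `coneSet` is a compact convex subset of `ℝ³` whose lower Pareto
frontier is not closed. -/
theorem coneSet_pareto_not_closed :
    IsCompact coneSet ∧ Convex ℝ coneSet ∧ ¬ IsClosed (pareto 3 coneSet) := by
  refine ⟨isCompact_coneSet, convex_convexHull ℝ _, ?_⟩
  intro hcl
  -- the sequence of Pareto points on the arc
  set u : ℕ → (Fin 3 → ℝ) :=
    fun n => ![(5:ℝ), 1 - Real.cos (1 / (n + 1)), 1 - Real.sin (1 / (n + 1))] with hu
  have hmem : ∀ n : ℕ, u n ∈ pareto 3 coneSet := by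
    intro n
    apply arc_mem_pareto
    · positivity
    · have hle1 : (1 : ℝ) / (n + 1) ≤ 1 := by
        rw [div_le_one (by positivity)]
        simp
      linarith [Real.pi_gt_three]
  have htend : Tendsto u atTop (𝓝 ![(5:ℝ), 0, 1]) := by
    rw [tendsto_pi_nhds]
    intro i
    have hbase : Tendsto (fun n : ℕ => (1:ℝ) / (n + 1)) atTop (𝓝 0) :=
      tendsto_one_div_add_atTop_nhds_zero_nat
    fin_cases i
    · simp only [hu]
      exact tendsto_const_nhds
    · have hcos : Tendsto (fun n : ℕ => Real.cos (1 / (n + 1))) atTop (𝓝 1) := by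
        have := (Real.continuous_cos.tendsto 0).comp hbase
        simpa [Function.comp_def] using this
      have := (tendsto_const_nhds (x := (1:ℝ)) (f := atTop (α := ℕ))).sub hcos
      simpa [hu] using this
    · have hsin : Tendsto (fun n : ℕ => Real.sin (1 / (n + 1))) atTop (𝓝 0) := by
        have := (Real.continuous_sin.tendsto 0).comp hbase
        simpa [Function.comp_def] using this
      have := (tendsto_const_nhds (x := (1:ℝ)) (f := atTop (α := ℕ))).sub hsin
      simpa [hu] using this
  have hlim : ![(5:ℝ), 0, 1] ∈ pareto 3 coneSet :=
    hcl.mem_of_tendsto htend (Eventually.of_forall hmem)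
  obtain ⟨-, hmin⟩ := hlim
  have hdom : ![(0:ℝ), 0, 1] ≤ ![(5:ℝ), 0, 1] := by
    intro i
    fin_cases i <;> norm_num
  have := hmin ![(0:ℝ), 0, 1] apex_mem_coneSet hdom
  have h0 := congrFun this 0
  norm_num at h0
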